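/- Fix n, g ∈ ℕ and functions k, r : (Fin n → Bool) → ℕ. Assume: (1) |k(S) − k(S')| ≤ 1 for every pair of adjacent states S, S'; (2) k(S) ≤ k(S_A) for every state S with exactly one true coordinate and k(S) ≤ k(S_B) for every state S with exactly one false coordinate (adequacy); and (3) k(S_A) + k(S_B) = n + 2 − 2g. Then ⟨n,k,r⟩ ≠ 0 and span(⟨n,k,r⟩) = 4n − 4g + 4. -/

import Mathlib

open Finset

noncomputable section

/-- The ring `(ℤ[z])[A, A⁻¹]`: Laurent polynomials in `A` over `ℤ[z]`. -/
abbrev LP := LaurentPolynomial (Polynomial ℤ)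

/-- The homological variable `z`. -/
def zz : LP := LaurentPolynomial.C Polynomial.X

/-- `a(S)`: the number of `A`-smoothings (coordinates where `S` is `false`). -/
def aCount {n : ℕ} (S : Fin n → Bool) : ℕ := (Finset.univ.filter fun i => S i = false).card

/-- `b(S)`: the number of `B`-smoothings (coordinates where `S` is `true`). -/
def bCount {n : ℕ} (S : Fin n → Bool) : ℕ := (Finset.univ.filter fun i => S i = true).card

/-- Two states are adjacent if they differ in exactly one coordinate. -/
def Adjacent {n : ℕ} (S S' : Fin n → Bool) : Prop :=
  ∃ i : Fin n, S' = Function.update S i (!(S i))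

/-- The bracket state sum
`⟨n,k,r⟩ = Σ_S A^(a(S)-b(S)) · (-A⁻² - A²)^(k S) · z^(r S)` in `(ℤ[z])[A,A⁻¹]`,
where `A^m = LaurentPolynomial.T m`. -/
def bracket (n : ℕ) (k r : (Fin n → Bool) → ℕ) : LP :=
  ∑ S : Fin n → Bool,
    LaurentPolynomial.T ((aCount S : ℤ) - (bCount S : ℤ)) *
      (-(LaurentPolynomial.T (-2)) - LaurentPolynomial.T 2) ^ (k S) * zz ^ (r S)


open LaurentPolynomial Polynomial in
/-- Expansion of one state's contribution as a sum of Finsupp singles. -/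
lemma expand_term (m : ℤ) (k r : ℕ) :
    (T m : LP) * (-(T (-2)) - T 2) ^ k * zz ^ r =
      ∑ j ∈ Finset.range (k + 1),
        AddMonoidAlgebra.single (m + 2 * k - 4 * j)
          ((-1) ^ k * (k.choose j : Polynomial ℤ) * Polynomial.X ^ r) := by
  have h1 : (-(T (-2)) - T 2 : LP) = (-1) * (T (-2) + T 2) := by ring
  rw [h1, mul_pow, add_pow]
  simp only [Finset.mul_sum, Finset.sum_mul, single_eq_C_mul_T]
  refine Finset.sum_congr rfl fun j hj => ?_
  rw [T_pow, T_pow]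
  have hm : (m + 2 * k - 4 * j : ℤ) = m + (j * (-2) + (k - j : ℕ) * 2) := by
    push_cast [Nat.cast_sub (Nat.le_of_lt_succ (Finset.mem_range.mp hj))]
    ring
  rw [hm, T_add, T_add]
  have hz : (zz : LP) ^ r = LaurentPolynomial.C (Polynomial.X ^ r) := by
    rw [zz, ← map_pow]
  have hneg : ((-1 : LP)) ^ k = LaurentPolynomial.C ((-1) ^ k) := by
    rw [show ((-1:LP)) = LaurentPolynomial.C (-1) by simp, ← map_pow]
  have hch : ((k.choose j : LP)) = LaurentPolynomial.C ((k.choose j : Polynomial ℤ)) := by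
    simp [map_natCast]
  rw [hz, hneg, hch, map_mul, map_mul]
  ring

lemma a_add_b {n : ℕ} (S : Fin n → Bool) : aCount S + bCount S = n := by
  unfold aCount bCount
  have h := Finset.card_filter_add_card_filter_not (s := Finset.univ)
    (p := fun i => S i = false)
  simp only [Bool.not_eq_false] at h
  simpa [Finset.card_univ] using h

lemma bCount_eq_zero {n : ℕ} (S : Fin n → Bool) :
    bCount S = 0 ↔ S = fun _ => false := by
  unfold bCount
  rw [Finset.card_eq_zero, Finset.filter_eq_empty_iff]
  constructor
  · intro h; funext i; simpa using h (Finset.mem_univ i)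
  · intro h i _; simp [h]

lemma bCount_update {n : ℕ} (S : Fin n → Bool) (i : Fin n) (h : S i = true) :
    bCount (Function.update S i false) + 1 = bCount S := by
  unfold bCount
  have heq : (Finset.univ.filter fun j => Function.update S i false j = true)
      = (Finset.univ.filter fun j => S j = true).erase i := by
    ext j
    by_cases hj : j = i
    · subst hj; simp
    · simp [Function.update_of_ne hj, hj]
  rw [heq, Finset.card_erase_of_mem (by simp [h])]
  have hpos : 0 < (Finset.univ.filter fun j => S j = true).card :=
    Finset.card_pos.mpr ⟨i, by simp [h]⟩
  omega

lemma aCount_flip {n : ℕ} (S : Fin n → Bool) : aCount (fun j => !(S j)) = bCount S := by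
  unfold aCount bCount; congr 1; ext j; simp

lemma bCount_flip {n : ℕ} (S : Fin n → Bool) : bCount (fun j => !(S j)) = aCount S := by
  unfold aCount bCount; congr 1; ext j; simp

lemma adjacent_flip {n : ℕ} (S S' : Fin n → Bool) (h : Adjacent S S') :
    Adjacent (fun j => !(S j)) (fun j => !(S' j)) := by
  obtain ⟨i, hi⟩ := h
  refine ⟨i, ?_⟩
  funext j
  by_cases hj : j = i
  · subst hj; simp [hi]
  · simp [hi, Function.update_of_ne hj]

lemma aCount_const_true {n : ℕ} : aCount (fun _ : Fin n => true) = 0 := by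
  unfold aCount; simp

lemma bCount_const_true {n : ℕ} : bCount (fun _ : Fin n => true) = n := by
  unfold bCount; simp [Finset.card_univ]

lemma aCount_const_false {n : ℕ} : aCount (fun _ : Fin n => false) = n := by
  unfold aCount; simp [Finset.card_univ]

lemma bCount_const_false {n : ℕ} : bCount (fun _ : Fin n => false) = 0 := by
  unfold bCount; simp

/-- Key induction: for any state other than the all-`A` state, the top exponent
`a(S) - b(S) + 2 k(S)` is at most `n + 2 k(S_A) - 2`. -/
lemma hi_lt (n : ℕ) (k : (Fin n → Bool) → ℕ)
    (hk : ∀ S S' : Fin n → Bool, Adjacent S S' → |(k S : ℤ) - (k S' : ℤ)| ≤ 1)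
    (hA : ∀ S : Fin n → Bool, bCount S = 1 → k S ≤ k (fun _ => false)) :
    ∀ S : Fin n → Bool, S ≠ (fun _ => false) →
      (aCount S : ℤ) - bCount S + 2 * k S ≤ (n : ℤ) + 2 * k (fun _ => false) - 2 := by
  have key : ∀ b : ℕ, ∀ S : Fin n → Bool, bCount S = b → S ≠ (fun _ => false) →
      (aCount S : ℤ) - bCount S + 2 * k S ≤ (n : ℤ) + 2 * k (fun _ => false) - 2 := by
    intro b
    induction b with
    | zero => intro S hb hne; exact absurd ((bCount_eq_zero S).mp hb) hne
    | succ b ih =>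
      intro S hb hne
      have hab : aCount S + bCount S = n := a_add_b S
      rcases Nat.eq_zero_or_pos b with hb0 | hbpos
      · subst hb0
        have hkS := hA S hb
        have : (aCount S : ℤ) = n - 1 := by omega
        rw [this, hb]
        push_cast
        omega
      · obtain ⟨i, hi⟩ : ∃ i, S i = true := by
          have : 0 < bCount S := by omega
          obtain ⟨i, hi⟩ := Finset.card_pos.mp this
          exact ⟨i, by simpa using hi⟩
        set S' := Function.update S i false with hS'
        have hb' : bCount S' = b := by
          have h2 := bCount_update S i hi
          rw [← hS'] at h2
          omega
        have hne' : S' ≠ (fun _ => false) := by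
          intro hcon
          rw [← bCount_eq_zero] at hcon
          omega
        have hadj : Adjacent S' S := by
          refine ⟨i, ?_⟩
          funext j
          by_cases hj : j = i
          · subst hj; simp [hS', hi]
          · simp [hS', Function.update_of_ne hj]
        have hk' := hk S' S hadj
        have hkle : (k S : ℤ) ≤ k S' + 1 := by
          rw [abs_le] at hk'; omega
        have hab' : aCount S' + bCount S' = n := a_add_b S'
        have := ih S' hb' hne'
        have hbS' : (bCount S' : ℤ) = bCount S - 1 := by omega
        have haS' : (aCount S' : ℤ) = aCount S + 1 := by omega
        omega
  exact fun S => key (bCount S) S rfl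

/-- Theorem 3.9: under the adjacency bound on `k`, adequacy, and the Euler
characteristic identity `k(S_A) + k(S_B) = n + 2 - 2g`, the bracket `⟨n,k,r⟩` is nonzero
and its span equals `4n - 4g + 4`. -/
theorem span_bracket_alternating (n g : ℕ) (k r : (Fin n → Bool) → ℕ)
    (hk : ∀ S S' : Fin n → Bool, Adjacent S S' → |(k S : ℤ) - (k S' : ℤ)| ≤ 1)
    (hA : ∀ S : Fin n → Bool, bCount S = 1 → k S ≤ k (fun _ => false))
    (hB : ∀ S : Fin n → Bool, aCount S = 1 → k S ≤ k (fun _ => true))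
    (hEuler : (k (fun _ => false) : ℤ) + (k (fun _ => true) : ℤ) = (n : ℤ) + 2 - 2 * g) :
    ∃ h0 : bracket n k r ≠ 0,
      (bracket n k r).coeff.support.max'
          (Finsupp.support_nonempty_iff.mpr (mt AddMonoidAlgebra.coeff_eq_zero.mp h0)) -
        (bracket n k r).coeff.support.min'
          (Finsupp.support_nonempty_iff.mpr (mt AddMonoidAlgebra.coeff_eq_zero.mp h0)) =
        4 * (n : ℤ) - 4 * g + 4 := by
  classical
  have hhiF := hi_lt n k hk hA
  have hflip := hi_lt n (fun S => k (fun j => !(S j)))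
    (fun S S' hadj => hk _ _ (adjacent_flip S S' hadj))
    (fun S hS => by
      have h1 : aCount (fun j => !(S j)) = 1 := by rw [aCount_flip]; exact hS
      exact hB _ h1)
  have hloT : ∀ S : Fin n → Bool, S ≠ (fun _ => true) →
      (bCount S : ℤ) - aCount S + 2 * k S ≤ (n : ℤ) + 2 * k (fun _ => true) - 2 := by
    intro S hS
    have hne : (fun j => !(S j)) ≠ (fun _ : Fin n => false) := by
      intro hcon
      apply hS
      funext j
      have hcj := congrFun hcon j
      simpa using hcj
    have h := hflip (fun j => !(S j)) hne
    rw [aCount_flip, bCount_flip] at h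
    simpa using h
  set D : ℤ := (n : ℤ) + 2 * k (fun _ => false) with hD
  set E : ℤ := -(n : ℤ) - 2 * k (fun _ => true) with hE
  have hb : bracket n k r = ∑ S : Fin n → Bool, ∑ j ∈ Finset.range (k S + 1),
      AddMonoidAlgebra.single (((aCount S : ℤ) - (bCount S : ℤ)) + 2 * (k S) - 4 * j)
        ((-1) ^ (k S) * ((k S).choose j : Polynomial ℤ) * Polynomial.X ^ (r S)) := by
    unfold bracket
    exact Finset.sum_congr rfl fun S _ => expand_term _ _ _
  have hcoeff : ∀ d : ℤ, (bracket n k r).coeff d = ∑ S : Fin n → Bool, ∑ j ∈ Finset.range (k S + 1),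
      (if (((aCount S : ℤ) - (bCount S : ℤ)) + 2 * (k S) - 4 * j) = d then
        ((-1) ^ (k S) * ((k S).choose j : Polynomial ℤ) * Polynomial.X ^ (r S)) else 0) := by
    intro d
    rw [hb, AddMonoidAlgebra.coeff_sum, Finsupp.finset_sum_apply]
    refine Finset.sum_congr rfl fun S _ => ?_
    rw [AddMonoidAlgebra.coeff_sum, Finsupp.finset_sum_apply]
    exact Finset.sum_congr rfl fun j _ => by rw [AddMonoidAlgebra.coeff_single, Finsupp.single_apply]
  -- upper bound on exponents
  have heub : ∀ (S : Fin n → Bool) (j : ℕ),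
      ((aCount S : ℤ) - (bCount S : ℤ)) + 2 * (k S) - 4 * j ≤ D := by
    intro S j
    have hj : (0:ℤ) ≤ 4 * j := by positivity
    by_cases hS : S = (fun _ => false)
    · subst hS
      rw [aCount_const_false, bCount_const_false]
      push_cast
      linarith
    · have := hhiF S hS; linarith
  have helb : ∀ (S : Fin n → Bool) (j : ℕ), j ≤ k S →
      E ≤ ((aCount S : ℤ) - (bCount S : ℤ)) + 2 * (k S) - 4 * j := by
    intro S j hj
    have hj' : (4:ℤ) * j ≤ 4 * k S := by exact_mod_cast by omega
    by_cases hS : S = (fun _ => true)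
    · subst hS
      rw [aCount_const_true, bCount_const_true]
      push_cast
      linarith
    · have := hloT S hS; linarith
  -- coefficient at D
  have hcD : (bracket n k r).coeff D = (-1) ^ (k (fun _ => false)) * Polynomial.X ^ (r (fun _ => false)) := by
    rw [hcoeff D]
    rw [Finset.sum_eq_single_of_mem (fun _ => false) (Finset.mem_univ _)]
    · rw [Finset.sum_eq_single_of_mem 0 (Finset.mem_range.mpr (Nat.succ_pos _))]
      · rw [if_pos]
        · simp
        · rw [aCount_const_false, bCount_const_false]; push_cast; ring
      · intro j hj hj0
        rw [if_neg]
        rw [aCount_const_false, bCount_const_false]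
        have : (1:ℤ) ≤ j := by exact_mod_cast Nat.one_le_iff_ne_zero.mpr hj0
        push_cast
        intro hcon
        rw [hD] at hcon
        linarith
    · intro S _ hS
      refine Finset.sum_eq_zero fun j hj => ?_
      rw [if_neg]
      have h1 := hhiF S hS
      have hj2 : (0:ℤ) ≤ 4 * j := by positivity
      intro hcon
      linarith
  -- coefficient at E
  have hcE : (bracket n k r).coeff E = (-1) ^ (k (fun _ => true)) * Polynomial.X ^ (r (fun _ => true)) := by
    rw [hcoeff E]
    rw [Finset.sum_eq_single_of_mem (fun _ => true) (Finset.mem_univ _)]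
    · rw [Finset.sum_eq_single_of_mem (k (fun _ => true))
        (Finset.mem_range.mpr (Nat.lt_succ_self _))]
      · rw [if_pos]
        · simp
        · rw [aCount_const_true, bCount_const_true]; push_cast; ring
      · intro j hj hjne
        rw [if_neg]
        rw [aCount_const_true, bCount_const_true]
        have hjlt : j ≤ k (fun _ => true) := Nat.lt_succ_iff.mp (Finset.mem_range.mp hj)
        have : (j:ℤ) < k (fun _ => true) := by
          exact_mod_cast lt_of_le_of_ne hjlt hjne
        push_cast
        intro hcon
        rw [hE] at hcon
        linarith
    · intro S _ hS
      refine Finset.sum_eq_zero fun j hj => ?_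
      rw [if_neg]
      have h1 := hloT S hS
      have hjle : j ≤ k S := Nat.lt_succ_iff.mp (Finset.mem_range.mp hj)
      have hj' : (4:ℤ) * j ≤ 4 * k S := by exact_mod_cast by omega
      intro hcon
      linarith
  have hXne : ∀ m l : ℕ, ((-1) ^ m * Polynomial.X ^ l : Polynomial ℤ) ≠ 0 := by
    intro m l
    exact mul_ne_zero (pow_ne_zero _ (by norm_num)) (pow_ne_zero _ Polynomial.X_ne_zero)
  have hDne : (bracket n k r).coeff D ≠ 0 := by rw [hcD]; exact hXne _ _
  have hEne : (bracket n k r).coeff E ≠ 0 := by rw [hcE]; exact hXne _ _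
  have h0 : bracket n k r ≠ 0 := by
    intro hcon
    apply hDne
    rw [hcon]
    rfl
  refine ⟨h0, ?_⟩
  have hmemD : D ∈ (bracket n k r).coeff.support := Finsupp.mem_support_iff.mpr hDne
  have hmemE : E ∈ (bracket n k r).coeff.support := Finsupp.mem_support_iff.mpr hEne
  have hub : ∀ d ∈ (bracket n k r).coeff.support, d ≤ D := by
    intro d hd
    by_contra hlt
    push_neg at hlt
    apply Finsupp.mem_support_iff.mp hd
    rw [hcoeff d]
    refine Finset.sum_eq_zero fun S _ => Finset.sum_eq_zero fun j hj => ?_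
    rw [if_neg]
    intro hcon
    have := heub S j
    rw [hcon] at this
    linarith
  have hlb : ∀ d ∈ (bracket n k r).coeff.support, E ≤ d := by
    intro d hd
    by_contra hlt
    push_neg at hlt
    apply Finsupp.mem_support_iff.mp hd
    rw [hcoeff d]
    refine Finset.sum_eq_zero fun S _ => Finset.sum_eq_zero fun j hj => ?_
    rw [if_neg]
    intro hcon
    have := helb S j (Nat.lt_succ_iff.mp (Finset.mem_range.mp hj))
    rw [hcon] at this
    linarith
  have hmax : (bracket n k r).coeff.support.max'
      (Finsupp.support_nonempty_iff.mpr (mt AddMonoidAlgebra.coeff_eq_zero.mp h0)) = D :=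
    le_antisymm (Finset.max'_le _ _ _ hub) (Finset.le_max' _ _ hmemD)
  have hmin : (bracket n k r).coeff.support.min'
      (Finsupp.support_nonempty_iff.mpr (mt AddMonoidAlgebra.coeff_eq_zero.mp h0)) = E :=
    le_antisymm (Finset.min'_le _ _ hmemE) (Finset.le_min' _ _ _ hlb)
  rw [hmax, hmin, hD, hE]
  linarith
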